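/- For fixed p ∈ (0, 0.5] and z ≥ 1, the function h(α) = ((1/p)z^α − 1/p + 1)^{1/α} is non-increasing in α > 0. Consequently, for an almost surely positive random variable X and 0 < α₁ ≤ α₂, p_{R,p}(X^{α₁}) ≤ p_{R,p}(X^{α₂}) and p_{L,p}(X^{α₂}) ≤ p_{L,p}(X^{α₁}). -/

import Mathlib

open Set MeasureTheory

/-- Cumulative distribution function of a law `μ` on `ℝ`. -/
noncomputable def cdf (μ : Measure ℝ) (x : ℝ) : ℝ := (μ (Iic x)).toReal

/-- Quantile (generalized inverse) function of `μ`. -/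
noncomputable def quantile (μ : Measure ℝ) (q : ℝ) : ℝ := sInf {x : ℝ | q ≤ cdf μ x}

/-- Theoretical `p`-left fence of `μ`. -/
noncomputable def Lfence (μ : Measure ℝ) (p : ℝ) : ℝ :=
  (1/p) * quantile μ p - ((1 - p)/p) * quantile μ (1 - p)

/-- Theoretical `p`-right fence of `μ`. -/
noncomputable def Rfence (μ : Measure ℝ) (p : ℝ) : ℝ :=
  (1/p) * quantile μ (1 - p) - ((1 - p)/p) * quantile μ p

/-- Probability of a left `p`-outside value. -/
noncomputable def pL (μ : Measure ℝ) (p : ℝ) : ℝ := (μ (Iio (Lfence μ p))).toReal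

/-- Probability of a right `p`-outside value. -/
noncomputable def pR (μ : Measure ℝ) (p : ℝ) : ℝ := (μ (Ioi (Rfence μ p))).toReal

private lemma key_ineq {c t s : ℝ} (hc : 1 ≤ c) (ht : 0 ≤ t) (hct : 0 ≤ c * t - c + 1)
    (hs : 1 ≤ s) : c * t ^ s - c + 1 ≤ (c * t - c + 1) ^ s := by
  have hc0 : (0:ℝ) < c := lt_of_lt_of_le one_pos hc
  have hconv := convexOn_rpow hs
  have hw1 : (0:ℝ) ≤ (c - 1)/c := by
    apply div_nonneg (by linarith) hc0.le
  have hw2 : (0:ℝ) ≤ 1/c := by positivity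
  have hsum : (c-1)/c + 1/c = 1 := by field_simp; ring
  have h1 : (1:ℝ) ∈ Ici (0:ℝ) := by norm_num
  have h2 : c * t - c + 1 ∈ Ici (0:ℝ) := hct
  have hmain := hconv.2 h1 h2 hw1 hw2 hsum
  have hpoint : ((c-1)/c) • (1:ℝ) + (1/c) • (c*t - c + 1) = t := by
    simp only [smul_eq_mul]
    field_simp
    ring
  rw [hpoint] at hmain
  simp only [smul_eq_mul, Real.one_rpow] at hmain
  have hmul := mul_le_mul_of_nonneg_left hmain hc0.le
  have hX : c * ((c-1)/c * 1 + 1/c * (c*t-c+1) ^ s) = (c-1) + (c*t-c+1) ^ s := by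
    field_simp
  rw [hX] at hmul
  linarith

private lemma gen_mono {c w α₁ α₂ : ℝ} (hc : 1 ≤ c) (hw : 0 < w) (hα₁ : 0 < α₁)
    (hα : α₁ ≤ α₂) (hpos : 0 ≤ c * w ^ α₂ - c + 1) :
    (c * w ^ α₂ - c + 1) ^ (1/α₂) ≤ (c * w ^ α₁ - c + 1) ^ (1/α₁) := by
  have hα₂ : 0 < α₂ := lt_of_lt_of_le hα₁ hα
  have ht0 : 0 < w ^ α₁ := Real.rpow_pos_of_pos hw _
  have hs : 1 ≤ α₂/α₁ := (one_le_div hα₁).2 hα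
  have hts : (w ^ α₁) ^ (α₂/α₁) = w ^ α₂ := by
    rw [← Real.rpow_mul hw.le]
    congr 1
    field_simp
  have hct : 0 ≤ c * w ^ α₁ - c + 1 := by
    rcases le_total w 1 with hw1 | hw1
    · have : w ^ α₂ ≤ w ^ α₁ := Real.rpow_le_rpow_of_exponent_ge hw hw1 hα
      nlinarith
    · have : (1:ℝ) ≤ w ^ α₁ := Real.one_le_rpow hw1 hα₁.le
      nlinarith
  have hkey := key_ineq hc ht0.le hct hs
  rw [hts] at hkey
  have hmono := Real.rpow_le_rpow hpos hkey (by positivity : (0:ℝ) ≤ 1/α₂)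
  calc (c * w ^ α₂ - c + 1) ^ (1/α₂)
      ≤ ((c * w ^ α₁ - c + 1) ^ (α₂/α₁)) ^ (1/α₂) := hmono
    _ = (c * w ^ α₁ - c + 1) ^ (1/α₁) := by
        rw [← Real.rpow_mul hct]
        congr 1
        field_simp

private lemma cdf_mono (μ : Measure ℝ) [IsProbabilityMeasure μ] : Monotone (cdf μ) :=
  fun _ _ hab => ENNReal.toReal_mono (measure_ne_top μ _)
    (measure_mono (Iic_subset_Iic.2 hab))

private lemma meas_Iic_zero (μ : Measure ℝ) [IsProbabilityMeasure μ]
    (hpos : μ (Ioi (0:ℝ)) = 1) : μ (Iic (0:ℝ)) = 0 := by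
  have h := measure_compl (measurableSet_Ioi (a := (0:ℝ))) (measure_ne_top μ _)
  rw [compl_Ioi, hpos, measure_univ] at h
  simpa using h

private lemma meas_inter_pos (μ : Measure ℝ) [IsProbabilityMeasure μ]
    (hpos : μ (Ioi (0:ℝ)) = 1) (A : Set ℝ) : μ A = μ (A ∩ Ioi 0) := by
  refine le_antisymm ?_ (measure_mono inter_subset_left)
  calc μ A ≤ μ ((A ∩ Ioi 0) ∪ Iic 0) := by
        refine measure_mono fun x hx => ?_
        by_cases h : 0 < x
        · exact Or.inl ⟨hx, h⟩
        · exact Or.inr (not_lt.1 h)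
    _ ≤ μ (A ∩ Ioi 0) + μ (Iic 0) := measure_union_le _ _
    _ = μ (A ∩ Ioi 0) := by rw [meas_Iic_zero μ hpos, add_zero]

private lemma cdf_nonpos (μ : Measure ℝ) [IsProbabilityMeasure μ]
    (hpos : μ (Ioi (0:ℝ)) = 1) {x : ℝ} (hx : x ≤ 0) : cdf μ x = 0 := by
  have h : μ (Iic x) = 0 :=
    le_antisymm (le_trans (measure_mono (Iic_subset_Iic.2 hx))
      (meas_Iic_zero μ hpos).le) (zero_le)
  simp [cdf, h]

private lemma quantile_spec (μ : Measure ℝ) [IsProbabilityMeasure μ]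
    (hpos : μ (Ioi (0:ℝ)) = 1) (hcont : Continuous (cdf μ)) {q : ℝ}
    (hq0 : 0 < q) (hq1 : q < 1) :
    0 < quantile μ q ∧ cdf μ (quantile μ q) = q ∧
      {x : ℝ | q ≤ cdf μ x} = Ici (quantile μ q) := by
  set S := {x : ℝ | q ≤ cdf μ x} with hS
  have hSsub : S ⊆ Ioi 0 := by
    intro x hx
    by_contra h
    have hx0 : x ≤ 0 := not_lt.1 h
    have := cdf_nonpos μ hpos hx0
    rw [hS] at hx
    simp only [mem_setOf_eq] at hx
    rw [this] at hx
    linarith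
  have hbdd : BddBelow S := ⟨0, fun x hx => (hSsub hx).le⟩
  have htend : Filter.Tendsto (cdf μ) Filter.atTop (nhds 1) := by
    have h := tendsto_measure_Iic_atTop (μ := μ)
    rw [measure_univ] at h
    have h2 := (ENNReal.tendsto_toReal ENNReal.one_ne_top).comp h
    exact h2
  have hne : S.Nonempty := by
    obtain ⟨x, hx⟩ := (htend.eventually (eventually_ge_nhds hq1)).exists
    exact ⟨x, hx⟩
  have hclosed : IsClosed S := isClosed_Ici.preimage hcont
  have hmem : quantile μ q ∈ S := hclosed.csInf_mem hne hbdd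
  have hq_pos : 0 < quantile μ q := hSsub hmem
  have hcdf_eq : cdf μ (quantile μ q) = q := by
    refine le_antisymm ?_ hmem
    by_contra h
    have hq' : q < cdf μ (quantile μ q) := lt_of_not_ge h
    have hev : ∀ᶠ x in nhds (quantile μ q), q < cdf μ x :=
      (hcont.tendsto (quantile μ q)).eventually (eventually_gt_nhds hq')
    have hev' : ∀ᶠ x in nhdsWithin (quantile μ q) (Iio (quantile μ q)), q < cdf μ x :=
      hev.filter_mono nhdsWithin_le_nhds
    obtain ⟨x, hx⟩ := hev'.exists
    have hmem' : ∀ᶠ x in nhdsWithin (quantile μ q) (Iio (quantile μ q)),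
        x ∈ Iio (quantile μ q) := eventually_mem_nhdsWithin
    obtain ⟨y, hy1, hy2⟩ := (hev'.and hmem').exists
    exact absurd (csInf_le hbdd (le_of_lt hy1 : y ∈ S)) (not_le.2 hy2)
  refine ⟨hq_pos, hcdf_eq, ?_⟩
  apply le_antisymm
  · exact fun x hx => csInf_le hbdd hx
  · intro x hx
    have : cdf μ (quantile μ q) ≤ cdf μ x := cdf_mono μ hx
    rw [hcdf_eq] at this
    exact this

private lemma cdf_map_pos (μ : Measure ℝ) [IsProbabilityMeasure μ]
    (hpos : μ (Ioi (0:ℝ)) = 1) {α : ℝ} (hα : 0 < α) {y : ℝ} (hy : 0 < y) :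
    cdf (μ.map (fun x => x ^ α)) y = cdf μ (y ^ (1/α)) := by
  have hf : Measurable (fun x : ℝ => x ^ α) :=
    (Real.continuous_rpow_const hα.le).measurable
  have hset : (fun x : ℝ => x ^ α) ⁻¹' (Iic y) ∩ Ioi 0 = Iic (y ^ (1/α)) ∩ Ioi 0 := by
    ext x
    simp only [mem_inter_iff, mem_preimage, mem_Iic, mem_Ioi]
    constructor
    · rintro ⟨h1, h2⟩
      refine ⟨?_, h2⟩
      have h3 : x ^ α ≤ (y ^ (1/α)) ^ α := by
        rw [one_div, Real.rpow_inv_rpow hy.le hα.ne']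
        exact h1
      exact (Real.rpow_le_rpow_iff (le_of_lt h2) (Real.rpow_pos_of_pos hy _).le hα).1 h3
    · rintro ⟨h1, h2⟩
      refine ⟨?_, h2⟩
      have h3 : x ^ α ≤ (y ^ (1/α)) ^ α :=
        Real.rpow_le_rpow (le_of_lt h2) h1 hα.le
      rwa [one_div, Real.rpow_inv_rpow hy.le hα.ne'] at h3
  rw [cdf, Measure.map_apply hf measurableSet_Iic,
    meas_inter_pos μ hpos ((fun x : ℝ => x ^ α) ⁻¹' (Iic y)), hset,
    ← meas_inter_pos μ hpos (Iic (y ^ (1/α)))]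
  rfl

private lemma cdf_map_nonpos (μ : Measure ℝ) [IsProbabilityMeasure μ]
    (hpos : μ (Ioi (0:ℝ)) = 1) {α : ℝ} (hα : 0 < α) {y : ℝ} (hy : y ≤ 0) :
    cdf (μ.map (fun x => x ^ α)) y = 0 := by
  have hf : Measurable (fun x : ℝ => x ^ α) :=
    (Real.continuous_rpow_const hα.le).measurable
  have hset : (fun x : ℝ => x ^ α) ⁻¹' (Iic y) ∩ Ioi 0 = ∅ := by
    ext x
    simp only [mem_inter_iff, mem_preimage, mem_Iic, mem_Ioi, mem_empty_iff_false,
      iff_false, not_and]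
    intro h1 h2
    have : (0:ℝ) < x ^ α := Real.rpow_pos_of_pos h2 _
    linarith
  have : μ ((fun x : ℝ => x ^ α) ⁻¹' (Iic y)) = 0 := by
    rw [meas_inter_pos μ hpos, hset, measure_empty]
  rw [cdf, Measure.map_apply hf measurableSet_Iic, this]
  rfl

private lemma quantile_map (μ : Measure ℝ) [IsProbabilityMeasure μ]
    (hpos : μ (Ioi (0:ℝ)) = 1) (hcont : Continuous (cdf μ)) {q α : ℝ}
    (hq0 : 0 < q) (hq1 : q < 1) (hα : 0 < α) :
    quantile (μ.map (fun x => x ^ α)) q = (quantile μ q) ^ α := by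
  obtain ⟨hx0, hcdf_eq, hSeq⟩ := quantile_spec μ hpos hcont hq0 hq1
  set x₀ := quantile μ q
  have hset : {y : ℝ | q ≤ cdf (μ.map (fun x => x ^ α)) y} = Ici (x₀ ^ α) := by
    ext y
    simp only [mem_setOf_eq, mem_Ici]
    constructor
    · intro hy
      have hy0 : 0 < y := by
        by_contra h
        rw [cdf_map_nonpos μ hpos hα (not_lt.1 h)] at hy
        linarith
      rw [cdf_map_pos μ hpos hα hy0] at hy
      have : y ^ (1/α) ∈ Ici x₀ := by rw [← hSeq]; exact hy
      have h2 : x₀ ^ α ≤ (y ^ (1/α)) ^ α := Real.rpow_le_rpow hx0.le this hα.le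
      rwa [one_div, Real.rpow_inv_rpow hy0.le hα.ne'] at h2
    · intro hy
      have hy0 : 0 < y := lt_of_lt_of_le (Real.rpow_pos_of_pos hx0 _) hy
      rw [cdf_map_pos μ hpos hα hy0]
      have h2 : x₀ ≤ y ^ (1/α) := by
        have h3 : x₀ ^ α ≤ (y ^ (1/α)) ^ α := by
          rw [one_div, Real.rpow_inv_rpow hy0.le hα.ne']
          exact hy
        exact (Real.rpow_le_rpow_iff hx0.le (Real.rpow_pos_of_pos hy0 _).le hα).1 h3
      have : y ^ (1/α) ∈ Ici x₀ := h2
      rw [← hSeq] at this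
      exact this
  rw [quantile, hset, csInf_Ici]

set_option maxHeartbeats 1000000 in
/-- For fixed `p ∈ (0, 1/2]` and `z ≥ 1`, the function
`h(α) = ((1/p)z^α − 1/p + 1)^(1/α)` is non-increasing in `α > 0`. Consequently,
for an a.s. positive `X` and `0 < α₁ ≤ α₂`, `p_{R,p}(X^{α₁}) ≤ p_{R,p}(X^{α₂})`
and `p_{L,p}(X^{α₂}) ≤ p_{L,p}(X^{α₁})`. -/
theorem power_monotone_outside_prob
    (μ : Measure ℝ) [IsProbabilityMeasure μ] (hac : μ ≪ volume)
    (hpos : μ (Ioi (0:ℝ)) = 1)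
    (hcont : Continuous (cdf μ)) (hsm : StrictMonoOn (cdf μ) (Ioi (0:ℝ)))
    (p z : ℝ) (hp : p ∈ Ioc (0:ℝ) (1/2)) (hz : 1 ≤ z)
    (α₁ α₂ : ℝ) (hα₁ : 0 < α₁) (hα : α₁ ≤ α₂) :
    ((1/p) * z ^ α₂ - 1/p + 1) ^ (1/α₂) ≤ ((1/p) * z ^ α₁ - 1/p + 1) ^ (1/α₁) ∧
    pR (μ.map (fun x => x ^ α₁)) p ≤ pR (μ.map (fun x => x ^ α₂)) p ∧
    pL (μ.map (fun x => x ^ α₂)) p ≤ pL (μ.map (fun x => x ^ α₁)) p := by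
  obtain ⟨hp0, hp2⟩ := hp
  have hα₂ : 0 < α₂ := lt_of_lt_of_le hα₁ hα
  have hc : (1:ℝ) ≤ 1/p := by
    rw [le_div_iff₀ hp0]; linarith
  have hc0 : (0:ℝ) < 1/p := by positivity
  -- Part 1
  have part1 : ((1/p) * z ^ α₂ - 1/p + 1) ^ (1/α₂) ≤ ((1/p) * z ^ α₁ - 1/p + 1) ^ (1/α₁) := by
    apply gen_mono hc (lt_of_lt_of_le one_pos hz) hα₁ hα
    have : (1:ℝ) ≤ z ^ α₂ := Real.one_le_rpow hz hα₂.le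
    nlinarith
  refine ⟨part1, ?_⟩
  -- quantiles of μ
  have hp1 : p < 1 := by linarith
  have hp1' : (0:ℝ) < 1 - p := by linarith
  have hp1'' : 1 - p < 1 := by linarith
  obtain ⟨hQa_pos, hFQa, _⟩ := quantile_spec μ hpos hcont hp0 hp1
  obtain ⟨hQb_pos, hFQb, _⟩ := quantile_spec μ hpos hcont hp1' hp1''
  set Qa := quantile μ p with hQa_def
  set Qb := quantile μ (1-p) with hQb_def
  have hQab : Qa ≤ Qb := by
    by_contra h
    have hlt : Qb < Qa := not_le.1 h
    have := hsm (mem_Ioi.2 hQb_pos) (mem_Ioi.2 hQa_pos) hlt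
    rw [hFQa, hFQb] at this
    linarith
  set zr := Qb / Qa with hzr_def
  have hzr1 : 1 ≤ zr := (one_le_div hQa_pos).2 hQab
  have hzr0 : 0 < zr := lt_of_lt_of_le one_pos hzr1
  set w := Qa / Qb with hw_def
  have hw0 : 0 < w := div_pos hQa_pos hQb_pos
  have hw1 : w ≤ 1 := (div_le_one hQb_pos).2 hQab
  have hf1 : Measurable (fun x : ℝ => x ^ α₁) :=
    (Real.continuous_rpow_const hα₁.le).measurable
  have hf2 : Measurable (fun x : ℝ => x ^ α₂) :=
    (Real.continuous_rpow_const hα₂.le).measurable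
  -- quantiles of mapped measures
  have hq1a : quantile (μ.map (fun x => x ^ α₁)) p = Qa ^ α₁ :=
    quantile_map μ hpos hcont hp0 hp1 hα₁
  have hq1b : quantile (μ.map (fun x => x ^ α₁)) (1-p) = Qb ^ α₁ :=
    quantile_map μ hpos hcont hp1' hp1'' hα₁
  have hq2a : quantile (μ.map (fun x => x ^ α₂)) p = Qa ^ α₂ :=
    quantile_map μ hpos hcont hp0 hp1 hα₂
  have hq2b : quantile (μ.map (fun x => x ^ α₂)) (1-p) = Qb ^ α₂ :=
    quantile_map μ hpos hcont hp1' hp1'' hα₂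
  -- inner expressions
  have hinner_R : ∀ α : ℝ, 0 < α → (1:ℝ) ≤ (1/p) * zr ^ α - 1/p + 1 := by
    intro α hα'
    have : (1:ℝ) ≤ zr ^ α := Real.one_le_rpow hzr1 hα'.le
    nlinarith
  -- Rfence as a power
  have hRfence : ∀ α : ℝ, 0 < α →
      Rfence (μ.map (fun x => x ^ α)) p
        = (Qa * ((1/p) * zr ^ α - 1/p + 1) ^ (1/α)) ^ α := by
    intro α hα'
    have hqa : quantile (μ.map (fun x => x ^ α)) p = Qa ^ α :=
      quantile_map μ hpos hcont hp0 hp1 hα'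
    have hqb : quantile (μ.map (fun x => x ^ α)) (1-p) = Qb ^ α :=
      quantile_map μ hpos hcont hp1' hp1'' hα'
    have hinner := hinner_R α hα'
    have hinner0 : (0:ℝ) ≤ (1/p) * zr ^ α - 1/p + 1 := by linarith
    rw [Rfence, hqa, hqb]
    rw [Real.mul_rpow hQa_pos.le (Real.rpow_pos_of_pos (by linarith) _).le]
    rw [← Real.rpow_mul hinner0, one_div α, inv_mul_cancel₀ hα'.ne', Real.rpow_one]
    have hQbe : Qb ^ α = Qa ^ α * zr ^ α := by
      rw [← Real.mul_rpow hQa_pos.le (le_of_lt hzr0)]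
      congr 1
      rw [hzr_def, mul_div_assoc']; exact (mul_div_cancel_left₀ Qb hQa_pos.ne').symm
    rw [hQbe]
    have hQa0 : (0:ℝ) < Qa ^ α := Real.rpow_pos_of_pos hQa_pos _
    field_simp
    ring
  -- pR monotone
  have hsubR : ∀ α : ℝ, 0 < α →
      pR (μ.map (fun x => x ^ α)) p
        = (μ (Ioi (Qa * ((1/p) * zr ^ α - 1/p + 1) ^ (1/α)))).toReal := by
    intro α hα'
    have hf : Measurable (fun x : ℝ => x ^ α) :=
      (Real.continuous_rpow_const hα'.le).measurable
    have hinner := hinner_R α hα'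
    set b := Qa * ((1/p) * zr ^ α - 1/p + 1) ^ (1/α) with hb_def
    have hb0 : 0 < b := mul_pos hQa_pos (Real.rpow_pos_of_pos (by linarith) _)
    rw [pR, hRfence α hα', Measure.map_apply hf measurableSet_Ioi]
    congr 1
    rw [meas_inter_pos μ hpos ((fun x : ℝ => x ^ α) ⁻¹' (Ioi (b ^ α))),
      meas_inter_pos μ hpos (Ioi b)]
    congr 1
    ext x
    simp only [mem_inter_iff, mem_preimage, mem_Ioi]
    constructor
    · rintro ⟨h1, h2⟩
      exact ⟨(Real.rpow_lt_rpow_iff hb0.le (le_of_lt h2) hα').1 h1, h2⟩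
    · rintro ⟨h1, h2⟩
      exact ⟨Real.rpow_lt_rpow hb0.le h1 hα', h2⟩
  have hhmono : Qa * ((1/p) * zr ^ α₂ - 1/p + 1) ^ (1/α₂)
      ≤ Qa * ((1/p) * zr ^ α₁ - 1/p + 1) ^ (1/α₁) := by
    apply mul_le_mul_of_nonneg_left _ hQa_pos.le
    apply gen_mono hc hzr0 hα₁ hα
    linarith [hinner_R α₂ hα₂]
  have partR : pR (μ.map (fun x => x ^ α₁)) p ≤ pR (μ.map (fun x => x ^ α₂)) p := by
    rw [hsubR α₁ hα₁, hsubR α₂ hα₂]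
    apply ENNReal.toReal_mono (measure_ne_top μ _)
    exact measure_mono (Ioi_subset_Ioi hhmono)
  refine ⟨partR, ?_⟩
  -- Lfence
  have hLfence : ∀ α : ℝ, 0 < α →
      Lfence (μ.map (fun x => x ^ α)) p
        = Qb ^ α * ((1/p) * w ^ α - 1/p + 1) := by
    intro α hα'
    have hqa : quantile (μ.map (fun x => x ^ α)) p = Qa ^ α :=
      quantile_map μ hpos hcont hp0 hp1 hα'
    have hqb : quantile (μ.map (fun x => x ^ α)) (1-p) = Qb ^ α :=
      quantile_map μ hpos hcont hp1' hp1'' hα'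
    rw [Lfence, hqa, hqb]
    have hQae : Qa ^ α = Qb ^ α * w ^ α := by
      rw [← Real.mul_rpow hQb_pos.le hw0.le]
      congr 1
      rw [hw_def, mul_div_assoc']; exact (mul_div_cancel_left₀ Qa hQb_pos.ne').symm
    rw [hQae]
    field_simp
    ring
  have hsubL : ∀ α : ℝ, 0 < α → 0 < (1/p) * w ^ α - 1/p + 1 →
      pL (μ.map (fun x => x ^ α)) p
        = (μ (Iio (Qb * ((1/p) * w ^ α - 1/p + 1) ^ (1/α)))).toReal := by
    intro α hα' hinner
    have hf : Measurable (fun x : ℝ => x ^ α) :=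
      (Real.continuous_rpow_const hα'.le).measurable
    set b := Qb * ((1/p) * w ^ α - 1/p + 1) ^ (1/α) with hb_def
    have hb0 : 0 < b := mul_pos hQb_pos (Real.rpow_pos_of_pos hinner _)
    have hLeq : Lfence (μ.map (fun x => x ^ α)) p = b ^ α := by
      rw [hLfence α hα', hb_def,
        Real.mul_rpow hQb_pos.le (Real.rpow_pos_of_pos hinner _).le,
        ← Real.rpow_mul hinner.le, one_div α, inv_mul_cancel₀ hα'.ne', Real.rpow_one]
    rw [pL, hLeq, Measure.map_apply hf measurableSet_Iio]
    congr 1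
    rw [meas_inter_pos μ hpos ((fun x : ℝ => x ^ α) ⁻¹' (Iio (b ^ α))),
      meas_inter_pos μ hpos (Iio b)]
    congr 1
    ext x
    simp only [mem_inter_iff, mem_preimage, mem_Iio, mem_Ioi]
    constructor
    · rintro ⟨h1, h2⟩
      exact ⟨(Real.rpow_lt_rpow_iff (le_of_lt h2) hb0.le hα').1 h1, h2⟩
    · rintro ⟨h1, h2⟩
      exact ⟨Real.rpow_lt_rpow (le_of_lt h2) h1 hα', h2⟩
  by_cases hL2 : 0 < (1/p) * w ^ α₂ - 1/p + 1
  · -- both fences positive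
    have hL1 : 0 < (1/p) * w ^ α₁ - 1/p + 1 := by
      have : w ^ α₂ ≤ w ^ α₁ := Real.rpow_le_rpow_of_exponent_ge hw0 hw1 hα
      nlinarith
    have hgmono : Qb * ((1/p) * w ^ α₂ - 1/p + 1) ^ (1/α₂)
        ≤ Qb * ((1/p) * w ^ α₁ - 1/p + 1) ^ (1/α₁) := by
      apply mul_le_mul_of_nonneg_left _ hQb_pos.le
      exact gen_mono hc hw0 hα₁ hα hL2.le
    rw [hsubL α₁ hα₁ hL1, hsubL α₂ hα₂ hL2]
    apply ENNReal.toReal_mono (measure_ne_top μ _)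
    exact measure_mono (Iio_subset_Iio hgmono)
  · -- Lfence at α₂ is nonpositive: pL(α₂) = 0
    have hL2' : (1/p) * w ^ α₂ - 1/p + 1 ≤ 0 := not_lt.1 hL2
    have hLneg : Lfence (μ.map (fun x => x ^ α₂)) p ≤ 0 := by
      rw [hLfence α₂ hα₂]
      have hQb0 : (0:ℝ) < Qb ^ α₂ := Real.rpow_pos_of_pos hQb_pos _
      nlinarith
    have hzero : pL (μ.map (fun x => x ^ α₂)) p = 0 := by
      have hf : Measurable (fun x : ℝ => x ^ α₂) :=
        (Real.continuous_rpow_const hα₂.le).measurable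
      rw [pL, Measure.map_apply hf measurableSet_Iio]
      have hempty : (fun x : ℝ => x ^ α₂) ⁻¹' (Iio (Lfence (μ.map (fun x => x ^ α₂)) p))
          ∩ Ioi 0 = ∅ := by
        ext x
        simp only [mem_inter_iff, mem_preimage, mem_Iio, mem_Ioi, mem_empty_iff_false,
          iff_false, not_and]
        intro h1 h2
        have : (0:ℝ) < x ^ α₂ := Real.rpow_pos_of_pos h2 _
        linarith
      rw [meas_inter_pos μ hpos, hempty, measure_empty]
      rfl
    rw [hzero]
    exact ENNReal.toReal_nonneg
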